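/- There is an algorithm that, given an integer k ≥ 2, a DFAO M generating a k-automatic sequence a = (a_n)_{n≥0}, and a length l ≥ 1, decides whether a avoids palindromes of length ≥ l, i.e., whether no factor of a of length ≥ l is a palindrome. -/

import Mathlib

/-- Run an encoded DFAO transition table from state `q` on a list of base-`k`
digits, least significant digit first (this is `w^R` for a most-significant-first
representation `w`). -/
def dfaoRun (trans : List (List ℕ)) : ℕ → List ℕ → ℕ
  | q, [] => q
  | q, d :: ds => dfaoRun trans ((trans.getD q []).getD d 0) ds

/-- The encoded DFAO `(trans, q0, out)` over input alphabet `Σ_k = {0,…,k-1}`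
generates the sequence `a`: for every `m` and every base-`k` representation `w`
of `m` (given least significant digit first, possibly with trailing zeros,
all digits `< k`), the output on `w` is `a m`. -/
def dfaoGenerates (k : ℕ) (trans : List (List ℕ)) (q0 : ℕ) (out : List ℕ)
    (a : ℕ → ℕ) : Prop :=
  ∀ (m : ℕ) (w : List ℕ), (∀ d ∈ w, d < k) → Nat.ofDigits k w = m →
    a m = out.getD (dfaoRun trans q0 w) 0

/-- The factor `a_i a_{i+1} ⋯ a_{i+L-1}` of the sequence `a`. -/
def factorAt (a : ℕ → ℕ) (i L : ℕ) : List ℕ :=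
  (List.range L).map fun j => a (i + j)

/-- `w` is a factor of the infinite word `a`. -/
def IsFactorOf (a : ℕ → ℕ) (w : List ℕ) : Prop :=
  ∃ i : ℕ, w = factorAt a i w.length

/-! ### Palindrome combinatorics -/

def PalAt (a : ℕ → ℕ) (i L : ℕ) : Prop := ∀ j < L, a (i + (L - 1 - j)) = a (i + j)

lemma factorAt_length (a i L) : (factorAt a i L).length = L := by
  simp [factorAt]

lemma factorAt_getElem (a i L) (j : ℕ) (hj : j < L) :
    (factorAt a i L)[j]'(by simpa [factorAt_length]) = a (i + j) := by
  simp [factorAt]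

lemma palAt_iff (a : ℕ → ℕ) (i L : ℕ) :
    PalAt a i L ↔ (factorAt a i L).reverse = factorAt a i L := by
  constructor
  · intro h
    apply List.ext_getElem (by simp [factorAt_length])
    intro j hj hj'
    rw [List.getElem_reverse]
    simp only [factorAt_length] at hj hj' ⊢
    rw [factorAt_getElem a i L (L - 1 - j) (by omega), factorAt_getElem a i L j hj']
    exact h j hj'
  · intro h j hj
    have hj' : j < (factorAt a i L).length := by simpa [factorAt_length]
    have h2 : (factorAt a i L).reverse[j]? = (factorAt a i L)[j]? := by rw [h]
    rw [List.getElem?_reverse (by simpa [factorAt_length] using hj'),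
      List.getElem?_eq_getElem (l := factorAt a i L) (by simp [factorAt_length]; omega),
      List.getElem?_eq_getElem hj'] at h2
    simp only [Option.some_inj, factorAt_length] at h2
    rw [factorAt_getElem a i L j hj] at h2
    rw [factorAt_getElem a i L (L - 1 - j) (by omega)] at h2
    exact h2

lemma palAt_step {a : ℕ → ℕ} {i L : ℕ} (h : PalAt a i (L + 2)) : PalAt a (i + 1) L := by
  intro j hj
  have := h (j + 1) (by omega)
  have e1 : i + (L + 2 - 1 - (j + 1)) = i + 1 + (L - 1 - j) := by omega
  have e2 : i + (j + 1) = i + 1 + j := by omega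
  rwa [e1, e2] at this

lemma palAt_descent {a : ℕ → ℕ} {l : ℕ} (hl : 1 ≤ l) :
    ∀ L, l ≤ L → ∀ i, PalAt a i L → ∃ i', PalAt a i' l ∨ PalAt a i' (l + 1) := by
  intro L
  induction L using Nat.strong_induction_on with
  | _ L ih =>
    intro hL i hp
    rcases Nat.lt_or_ge L (l + 2) with h | h
    · rcases (by omega : L = l ∨ L = l + 1) with rfl | rfl
      · exact ⟨i, Or.inl hp⟩
      · exact ⟨i, Or.inr hp⟩
    · have h2 : L - 2 + 2 = L := by omega
      have := palAt_step (a := a) (i := i) (L := L - 2) (by rwa [h2])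
      exact ih (L - 2) (by omega) (by omega) (i + 1) this

/-- Main reduction: avoiding palindromes of length ≥ l ↔ no PalAt of length l or l+1. -/
lemma avoid_iff (a : ℕ → ℕ) {l : ℕ} (hl : 1 ≤ l) :
    (∀ w : List ℕ, IsFactorOf a w → l ≤ w.length → w.reverse ≠ w) ↔
      (∀ i, ¬ PalAt a i l) ∧ (∀ i, ¬ PalAt a i (l + 1)) := by
  constructor
  · intro h
    constructor
    · intro i hp
      exact h (factorAt a i l) ⟨i, by rw [factorAt_length]⟩ (by simp [factorAt_length])
        ((palAt_iff a i l).1 hp)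
    · intro i hp
      exact h (factorAt a i (l + 1)) ⟨i, by rw [factorAt_length]⟩
        (by simp [factorAt_length]) ((palAt_iff a i (l + 1)).1 hp)
  · rintro ⟨h1, h2⟩ w ⟨i, hi⟩ hlen hpal
    have : PalAt a i w.length := by
      rw [palAt_iff]; rw [hi] at hpal; exact hpal
    obtain ⟨i', hi'⟩ := palAt_descent hl w.length hlen i this
    rcases hi' with h | h
    · exact h1 i' h
    · exact h2 i' h

/-! ### Product automaton machinery -/

def cstep (k : ℕ) (trans : List (List ℕ)) (p : ℕ × ℕ) (d : ℕ) : ℕ × ℕ :=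
  ((trans.getD p.1 []).getD ((d + p.2) % k) 0, (d + p.2) / k)

def crun (k : ℕ) (trans : List (List ℕ)) (p : ℕ × ℕ) (w : List ℕ) : ℕ × ℕ :=
  w.foldl (cstep k trans) p

/-- The word of digits of `n + r` produced while reading digits of `n` with carry `r`. -/
def produced (k : ℕ) : ℕ → List ℕ → List ℕ
  | _, [] => []
  | r, d :: ds => (d + r) % k :: produced k ((d + r) / k) ds

variable {k : ℕ} {trans : List (List ℕ)}

lemma crun_nil (p : ℕ × ℕ) : crun k trans p [] = p := rfl

lemma crun_cons (p : ℕ × ℕ) (d : ℕ) (w : List ℕ) :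
    crun k trans p (d :: w) = crun k trans (cstep k trans p d) w := rfl

lemma crun_append (p : ℕ × ℕ) (w₁ w₂ : List ℕ) :
    crun k trans p (w₁ ++ w₂) = crun k trans (crun k trans p w₁) w₂ :=
  List.foldl_append ..

lemma cstep_snd_le (hk : 2 ≤ k) {d : ℕ} (hd : d < k) (p : ℕ × ℕ) :
    (cstep k trans p d).2 ≤ p.2 := by
  show (d + p.2) / k ≤ p.2
  rw [Nat.div_le_iff_le_mul_add_pred (by omega)]
  have h1 : p.2 * 1 ≤ p.2 * k := Nat.mul_le_mul_left _ (by omega)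
  have h2 : p.2 * k = k * p.2 := Nat.mul_comm _ _
  omega

lemma crun_snd_le (hk : 2 ≤ k) {w : List ℕ} (hw : ∀ d ∈ w, d < k) (p : ℕ × ℕ) :
    (crun k trans p w).2 ≤ p.2 := by
  induction w generalizing p with
  | nil => simp [crun_nil]
  | cons d ds ih =>
    rw [crun_cons]
    exact le_trans (ih (fun x hx => hw x (by simp [hx])) _)
      (cstep_snd_le hk (hw d (by simp)) p)

lemma crun_zeros_flush (hk : 2 ≤ k) :
    ∀ (t : ℕ) (p : ℕ × ℕ), p.2 ≤ t → (crun k trans p (List.replicate t 0)).2 = 0 := by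
  intro t
  induction t with
  | zero => intro p hp; rw [List.replicate_zero, crun_nil]; omega
  | succ t ih =>
    intro p hp
    rw [List.replicate_succ, crun_cons]
    apply ih
    show (0 + p.2) / k ≤ t
    have h1 : (0 + p.2) / k ≤ p.2 / 2 := by
      rw [Nat.zero_add]; exact Nat.div_le_div_left hk (by omega)
    omega

lemma produced_lt (hk : 2 ≤ k) : ∀ (r : ℕ) (w : List ℕ), ∀ d ∈ produced k r w, d < k := by
  intro r w
  induction w generalizing r with
  | nil => simp [produced]
  | cons d ds ih =>
    intro x hx
    rw [produced] at hx
    rcases List.mem_cons.1 hx with rfl | hx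
    · exact Nat.mod_lt _ (by omega)
    · exact ih _ x hx

lemma produced_ofDigits (hk : 2 ≤ k) :
    ∀ (w : List ℕ) (q r : ℕ),
      Nat.ofDigits k (produced k r w) + (crun k trans (q, r) w).2 * k ^ w.length =
        Nat.ofDigits k w + r := by
  intro w
  induction w with
  | nil => simp [produced, crun_nil, Nat.ofDigits]
  | cons d ds ih =>
    intro q r
    rw [produced, crun_cons, Nat.ofDigits_cons, Nat.ofDigits_cons]
    show (d + r) % k + k * Nat.ofDigits k (produced k ((d + r) / k) ds) +
        (crun k trans ((trans.getD q []).getD ((d + r) % k) 0, (d + r) / k) ds).2 *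
          k ^ (ds.length + 1) = d + k * Nat.ofDigits k ds + r
    have := ih ((trans.getD q []).getD ((d + r) % k) 0) ((d + r) / k)
    have hmd : (d + r) % k + k * ((d + r) / k) = d + r := Nat.mod_add_div _ _
    have hpow : k ^ (ds.length + 1) = k * k ^ ds.length := by ring
    rw [hpow]
    nlinarith [this]

lemma produced_fst :
    ∀ (w : List ℕ) (q r : ℕ),
      (crun k trans (q, r) w).1 = dfaoRun trans q (produced k r w) := by
  intro w
  induction w with
  | nil => simp [produced, crun_nil, dfaoRun]
  | cons d ds ih =>
    intro q r
    rw [produced, crun_cons, dfaoRun]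
    exact ih _ _

def pinit (q0 L : ℕ) : List (ℕ × ℕ) := (List.range L).map fun j => (q0, j)

def prun (k : ℕ) (trans : List (List ℕ)) (s : List (ℕ × ℕ)) (w : List ℕ) : List (ℕ × ℕ) :=
  s.map fun p => crun k trans p w

def windowOut (out : List ℕ) (s : List (ℕ × ℕ)) : List ℕ := s.map fun p => out.getD p.1 0

lemma prun_pinit (q0 L : ℕ) (w : List ℕ) :
    prun k trans (pinit q0 L) w = (List.range L).map fun j => crun k trans (q0, j) w := by
  simp [prun, pinit]

/-- If all carries are flushed, the window read off the product state is the factor of `a`. -/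
lemma window_correct {q0 : ℕ} {out : List ℕ} {a : ℕ → ℕ} (hk : 2 ≤ k)
    (hgen : dfaoGenerates k trans q0 out a) (L : ℕ) (w : List ℕ) (hw : ∀ d ∈ w, d < k)
    (hfl : ∀ p ∈ prun k trans (pinit q0 L) w, p.2 = 0) :
    windowOut out (prun k trans (pinit q0 L) w) = factorAt a (Nat.ofDigits k w) L := by
  rw [prun_pinit] at hfl ⊢
  unfold windowOut factorAt
  rw [List.map_map]
  apply List.map_congr_left
  intro j hj
  show out.getD (crun k trans (q0, j) w).1 0 = a (Nat.ofDigits k w + j)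
  have hfl' : (crun k trans (q0, j) w).2 = 0 := hfl _ (List.mem_map_of_mem hj)
  have hod := produced_ofDigits (trans := trans) hk w q0 j
  rw [hfl', Nat.zero_mul, Nat.add_zero] at hod
  rw [produced_fst]
  exact (hgen _ (produced k j w) (produced_lt hk j w) hod).symm

/-- For every starting index `i` there is a word reaching a fully flushed product state. -/
lemma exists_flushing {q0 : ℕ} (hk : 2 ≤ k) (i L : ℕ) :
    ∃ w : List ℕ, (∀ d ∈ w, d < k) ∧ Nat.ofDigits k w = i ∧
      ∀ p ∈ prun k trans (pinit q0 L) w, p.2 = 0 := by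
  refine ⟨Nat.digits k i ++ List.replicate L 0, ?_, ?_, ?_⟩
  · intro d hd
    rcases List.mem_append.1 hd with hd | hd
    · exact Nat.digits_lt_base hk hd
    · rw [List.eq_of_mem_replicate hd]; omega
  · rw [Nat.ofDigits_append, Nat.ofDigits_digits]
    have : Nat.ofDigits k (List.replicate L 0) = 0 := by
      induction L with
      | zero => simp [Nat.ofDigits]
      | succ n ih => rw [List.replicate_succ, Nat.ofDigits_cons, ih]; simp
    rw [this]; ring
  · rw [prun_pinit]
    intro p hp
    obtain ⟨j, hj, rfl⟩ := List.mem_map.1 hp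
    rw [List.mem_range] at hj
    rw [crun_append]
    apply crun_zeros_flush hk
    calc (crun k trans (q0, j) (Nat.digits k i)).2 ≤ j :=
          crun_snd_le hk (fun d hd => Nat.digits_lt_base hk hd) _
      _ ≤ L := by omega

/-! ### State space bound and pumping -/

def Qset (trans : List (List ℕ)) (q0 : ℕ) : Finset ℕ :=
  insert q0 (insert 0 trans.flatten.toFinset)

def stateBound (trans : List (List ℕ)) (L : ℕ) : ℕ :=
  ((trans.flatten.length + 2) * (L + 1)) ^ L

lemma mem_of_getElem?' {α : Type} {l : List α} {n : ℕ} {v : α} (h : l[n]? = some v) : v ∈ l := by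
  obtain ⟨hn, rfl⟩ := List.getElem?_eq_some_iff.1 h
  exact List.getElem_mem _

lemma cstep_fst_mem (q0 : ℕ) (p : ℕ × ℕ) (d : ℕ) :
    (cstep k trans p d).1 ∈ Qset trans q0 := by
  show (trans.getD p.1 []).getD ((d + p.2) % k) 0 ∈ _
  set row := trans.getD p.1 [] with hrow
  rw [List.getD_eq_getElem?_getD]
  rcases h : row[(d + p.2) % k]? with _ | v
  · simp [Qset]
  · simp only [Option.getD_some]
    have hv : v ∈ row := mem_of_getElem?' h
    have hrow_mem : row ∈ trans ∨ row = [] := by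
      rw [hrow, List.getD_eq_getElem?_getD]
      rcases h2 : trans[p.1]? with _ | r
      · right; simp
      · left; simpa using mem_of_getElem?' h2
    rcases hrow_mem with hm | hm
    · have : v ∈ trans.flatten := List.mem_flatten.2 ⟨row, hm, hv⟩
      simp [Qset, this]
    · rw [hm] at hv; simp at hv

lemma crun_fst_mem (q0 : ℕ) : ∀ (w : List ℕ) (p : ℕ × ℕ), p.1 ∈ Qset trans q0 →
    (crun k trans p w).1 ∈ Qset trans q0 := by
  intro w
  induction w with
  | nil => intro p hp; rwa [crun_nil]
  | cons d ds ih => intro p hp; rw [crun_cons]; exact ih _ (cstep_fst_mem q0 _ d)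

lemma Qset_card_le : (Qset trans q0).card ≤ trans.flatten.length + 2 := by
  unfold Qset
  calc (insert q0 (insert 0 trans.flatten.toFinset)).card
      ≤ (insert 0 trans.flatten.toFinset).card + 1 := Finset.card_insert_le _ _
    _ ≤ trans.flatten.toFinset.card + 1 + 1 := by
        have := Finset.card_insert_le 0 trans.flatten.toFinset; omega
    _ ≤ trans.flatten.length + 2 := by have := trans.flatten.toFinset_card_le; omega

lemma shorten (hk : 2 ≤ k) (q0 L : ℕ) :
    ∀ (n : ℕ) (w : List ℕ), w.length ≤ n → (∀ d ∈ w, d < k) →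
      ∃ w' : List ℕ, (∀ d ∈ w', d < k) ∧ w'.length ≤ stateBound trans L ∧
        ∀ j < L, crun k trans (q0, j) w' = crun k trans (q0, j) w := by
  intro n
  induction n with
  | zero =>
    intro w hw hd
    exact ⟨w, hd, by omega, fun j _ => rfl⟩
  | succ n ih =>
    intro w hw hd
    by_cases hB : w.length ≤ stateBound trans L
    · exact ⟨w, hd, hB, fun j _ => rfl⟩
    push_neg at hB
    -- pigeonhole
    set Pfin : Finset (ℕ × ℕ) := Qset trans q0 ×ˢ Finset.range (L + 1) with hPfin
    have hmaps : ∀ m : Fin (w.length + 1), (fun j : Fin L => crun k trans (q0, j.1) (w.take m.1))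
        ∈ Fintype.piFinset (fun _ : Fin L => Pfin) := by
      intro m
      rw [Fintype.mem_piFinset]
      intro j
      rw [hPfin, Finset.mem_product]
      constructor
      · exact crun_fst_mem q0 _ _ (by simp [Qset])
      · rw [Finset.mem_range]
        have : (crun k trans (q0, j.1) (w.take m.1)).2 ≤ j.1 :=
          crun_snd_le hk (fun d hdm => hd d (List.mem_of_mem_take hdm)) _
        omega
    have hcard : (Fintype.piFinset (fun _ : Fin L => Pfin)).card < (Finset.univ : Finset (Fin (w.length + 1))).card := by
      rw [Finset.card_univ, Fintype.card_fin, Fintype.card_piFinset]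
      have h1 : Pfin.card ≤ (trans.flatten.length + 2) * (L + 1) := by
        rw [hPfin, Finset.card_product, Finset.card_range]
        exact Nat.mul_le_mul_right _ Qset_card_le
      calc ∏ _j : Fin L, Pfin.card = Pfin.card ^ L := by
            rw [Finset.prod_const, Finset.card_univ, Fintype.card_fin]
        _ ≤ ((trans.flatten.length + 2) * (L + 1)) ^ L := Nat.pow_le_pow_left h1 L
        _ = stateBound trans L := rfl
        _ < w.length + 1 := by omega
    obtain ⟨m1, _, m2, _, hne, heq⟩ :=
      Finset.exists_ne_map_eq_of_card_lt_of_maps_to hcard (fun m _ => hmaps m)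
    -- wlog m1 < m2
    rcases Ne.lt_or_gt (fun h => hne (by exact_mod_cast h)) with hlt | hlt
    all_goals {
      first
      | (have h12 : (m1 : ℕ) < (m2 : ℕ) := hlt
         have heq' : ∀ j < L, crun k trans (q0, j) (w.take m1.1) = crun k trans (q0, j) (w.take m2.1) :=
           fun j hj => congrFun heq ⟨j, hj⟩
         set a1 : ℕ := m1.1 with ha1
         set a2 : ℕ := m2.1 with ha2)
      | (have h12 : (m2 : ℕ) < (m1 : ℕ) := hlt
         have heq' : ∀ j < L, crun k trans (q0, j) (w.take m2.1) = crun k trans (q0, j) (w.take m1.1) :=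
           fun j hj => (congrFun heq ⟨j, hj⟩).symm
         set a1 : ℕ := m2.1 with ha1
         set a2 : ℕ := m1.1 with ha2)
      have ha2le : a2 ≤ w.length := by omega
      have hlen : (w.take a1 ++ w.drop a2).length < w.length := by
        rw [List.length_append, List.length_take, List.length_drop]
        omega
      have hdig : ∀ d ∈ w.take a1 ++ w.drop a2, d < k := by
        intro d hdm
        rcases List.mem_append.1 hdm with h | h
        · exact hd d (List.mem_of_mem_take h)
        · exact hd d (List.mem_of_mem_drop h)
      have hrun : ∀ j < L, crun k trans (q0, j) (w.take a1 ++ w.drop a2) =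
          crun k trans (q0, j) w := by
        intro j hj
        rw [crun_append, heq' j hj, ← crun_append, List.take_append_drop]
      obtain ⟨w', hw1, hw2, hw3⟩ := ih (w.take a1 ++ w.drop a2) (by omega) hdig
      exact ⟨w', hw1, hw2, fun j hj => (hw3 j hj).trans (hrun j hj)⟩
    }

/-! ### The decision procedure -/

def wordsLen (k : ℕ) : ℕ → List (List ℕ)
  | 0 => [[]]
  | n + 1 => (List.range k).flatMap fun d => (wordsLen k n).map (d :: ·)

def allWords (k B : ℕ) : List (List ℕ) := (List.range (B + 1)).flatMap (wordsLen k)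

def badB (out : List ℕ) (s : List (ℕ × ℕ)) : Bool :=
  decide ((s.map Prod.snd).sum = 0) && decide ((windowOut out s).reverse = windowOut out s)

def checkLen (k : ℕ) (trans : List (List ℕ)) (q0 : ℕ) (out : List ℕ) (L : ℕ) : Bool :=
  decide (((allWords k (stateBound trans L)).map fun w =>
    cond (badB out (prun k trans (pinit q0 L) w)) 1 0).sum = 0)

def decider (x : ℕ × List (List ℕ) × ℕ × List ℕ × ℕ) : Bool :=
  checkLen x.1 x.2.1 x.2.2.1 x.2.2.2.1 x.2.2.2.2 &&
    checkLen x.1 x.2.1 x.2.2.1 x.2.2.2.1 (x.2.2.2.2 + 1)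

lemma mem_wordsLen (k : ℕ) : ∀ (n : ℕ) (w : List ℕ),
    w ∈ wordsLen k n ↔ w.length = n ∧ ∀ d ∈ w, d < k := by
  intro n
  induction n with
  | zero => intro w; simp [wordsLen, List.length_eq_zero_iff]; rintro rfl; simp
  | succ n ih =>
    intro w
    simp only [wordsLen, List.mem_flatMap, List.mem_map, List.mem_range]
    constructor
    · rintro ⟨d, hd, u, hu, rfl⟩
      obtain ⟨h1, h2⟩ := (ih u).1 hu
      refine ⟨by simp [h1], ?_⟩
      intro x hx
      rcases List.mem_cons.1 hx with rfl | hx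
      · exact hd
      · exact h2 x hx
    · rintro ⟨h1, h2⟩
      rcases w with _ | ⟨d, u⟩
      · simp at h1
      · refine ⟨d, h2 d (by simp), u, (ih u).2 ⟨by simpa using h1, fun x hx => h2 x (by simp [hx])⟩, rfl⟩

lemma mem_allWords (k B : ℕ) (w : List ℕ) :
    w ∈ allWords k B ↔ w.length ≤ B ∧ ∀ d ∈ w, d < k := by
  unfold allWords
  simp only [List.mem_flatMap, List.mem_range]
  constructor
  · rintro ⟨n, hn, hw⟩
    obtain ⟨h1, h2⟩ := (mem_wordsLen k n w).1 hw
    exact ⟨by omega, h2⟩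
  · rintro ⟨h1, h2⟩
    exact ⟨w.length, by omega, (mem_wordsLen k _ w).2 ⟨rfl, h2⟩⟩

lemma natSum_eq_zero {l : List ℕ} : l.sum = 0 ↔ ∀ x ∈ l, x = 0 := by
  induction l with
  | nil => simp
  | cons a l ih => simp [Nat.add_eq_zero, ih]

lemma badB_iff (out : List ℕ) (s : List (ℕ × ℕ)) :
    badB out s = true ↔ (∀ p ∈ s, p.2 = 0) ∧ (windowOut out s).reverse = windowOut out s := by
  unfold badB
  rw [Bool.and_eq_true, decide_eq_true_iff, decide_eq_true_iff, natSum_eq_zero]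
  constructor
  · rintro ⟨h1, h2⟩
    exact ⟨fun p hp => h1 p.2 (List.mem_map_of_mem hp), h2⟩
  · rintro ⟨h1, h2⟩
    refine ⟨?_, h2⟩
    intro x hx
    obtain ⟨p, hp, rfl⟩ := List.mem_map.1 hx
    exact h1 p hp

lemma checkLen_iff {q0 : ℕ} {out : List ℕ} {a : ℕ → ℕ} (hk : 2 ≤ k)
    (hgen : dfaoGenerates k trans q0 out a) (L : ℕ) :
    checkLen k trans q0 out L = true ↔ ∀ i, ¬ PalAt a i L := by
  unfold checkLen
  rw [decide_eq_true_iff, natSum_eq_zero]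
  constructor
  · -- if the check passes, no palindromic window
    intro h i hp
    obtain ⟨w, hw1, hw2, hw3⟩ := exists_flushing (trans := trans) (q0 := q0) hk i L
    obtain ⟨w', hd', hlen', hrun'⟩ := shorten hk q0 L w.length w le_rfl hw1
    have hprun : prun k trans (pinit q0 L) w' = prun k trans (pinit q0 L) w := by
      rw [prun_pinit, prun_pinit]
      apply List.map_congr_left
      intro j hj
      exact hrun' j (List.mem_range.1 hj)
    have hbad : badB out (prun k trans (pinit q0 L) w') = true := by
      rw [badB_iff, hprun]
      refine ⟨hw3, ?_⟩
      rw [window_correct hk hgen L w hw1 hw3, hw2]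
      exact (palAt_iff a i L).1 hp
    have := h 1 (List.mem_map.2 ⟨w', (mem_allWords _ _ _).2 ⟨hlen', hd'⟩, by rw [hbad]; rfl⟩)
    omega
  · -- conversely
    intro h x hx
    obtain ⟨w, hw, hval⟩ := List.mem_map.1 hx
    obtain ⟨hlen, hd⟩ := (mem_allWords _ _ _).1 hw
    by_cases hbad : badB out (prun k trans (pinit q0 L) w) = true
    · exfalso
      obtain ⟨hfl, hpal⟩ := (badB_iff _ _).1 hbad
      apply h (Nat.ofDigits k w)
      rw [palAt_iff]
      rwa [window_correct hk hgen L w hd hfl] at hpal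
    · rw [Bool.not_eq_true] at hbad
      rw [← hval, hbad]
      rfl

lemma decider_iff {q0 l : ℕ} {out : List ℕ} {a : ℕ → ℕ} (hk : 2 ≤ k)
    (hgen : dfaoGenerates k trans q0 out a) (hl : 1 ≤ l) :
    decider (k, trans, q0, out, l) = true ↔
      ∀ w : List ℕ, IsFactorOf a w → l ≤ w.length → w.reverse ≠ w := by
  rw [avoid_iff a hl]
  unfold decider
  rw [Bool.and_eq_true, checkLen_iff hk hgen l, checkLen_iff hk hgen (l + 1)]

/-! ### Computability of the decider -/

section PrimrecProofs

open Primrec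

private lemma hsum : Primrec (List.sum : List ℕ → ℕ) :=
  (list_foldr .id (const 0) (to₂ (nat_add.comp (fst.comp snd) (snd.comp snd)))).of_eq
    fun _ => rfl

private lemma hcstep :
    Primrec fun x : (ℕ × List (List ℕ)) × (ℕ × ℕ) × ℕ => cstep x.1.1 x.1.2 x.2.1 x.2.2 := by
  have hk : Primrec fun x : (ℕ × List (List ℕ)) × (ℕ × ℕ) × ℕ => x.1.1 := fst.comp fst
  have htr : Primrec fun x : (ℕ × List (List ℕ)) × (ℕ × ℕ) × ℕ => x.1.2 := snd.comp fst
  have hp1 : Primrec fun x : (ℕ × List (List ℕ)) × (ℕ × ℕ) × ℕ => x.2.1.1 :=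
    fst.comp (fst.comp snd)
  have hp2 : Primrec fun x : (ℕ × List (List ℕ)) × (ℕ × ℕ) × ℕ => x.2.1.2 :=
    snd.comp (fst.comp snd)
  have hd : Primrec fun x : (ℕ × List (List ℕ)) × (ℕ × ℕ) × ℕ => x.2.2 := snd.comp snd
  have hadd := nat_add.comp hd hp2
  have hrow := (list_getD ([] : List ℕ)).comp htr hp1
  have hval := (list_getD (0 : ℕ)).comp hrow (nat_mod.comp hadd hk)
  exact hval.pair (nat_div.comp hadd hk)

private lemma hcrun :
    Primrec fun x : (ℕ × List (List ℕ)) × (ℕ × ℕ) × List ℕ => crun x.1.1 x.1.2 x.2.1 x.2.2 :=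
  (list_foldl (f := fun x : (ℕ × List (List ℕ)) × (ℕ × ℕ) × List ℕ => x.2.2)
    (g := fun x => x.2.1)
    (h := fun x sd => cstep x.1.1 x.1.2 sd.1 sd.2)
    (snd.comp snd) (fst.comp snd)
    (hcstep.comp ((fst.comp fst).pair snd)).to₂).of_eq fun _ => rfl

private lemma hprun :
    Primrec fun x : (ℕ × List (List ℕ)) × List (ℕ × ℕ) × List ℕ =>
      prun x.1.1 x.1.2 x.2.1 x.2.2 :=
  list_map (fst.comp snd)
    ((hcrun.comp (((fst.comp (fst.comp fst)).pair (snd.comp (fst.comp fst))).pair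
      (snd.pair (snd.comp (snd.comp fst))))).to₂)

private lemma hpinit : Primrec₂ pinit :=
  list_map (list_range.comp snd) ((Primrec₂.pair.comp (fst.comp fst) snd).to₂)

private lemma hwindowOut : Primrec₂ windowOut :=
  list_map snd (((list_getD (0 : ℕ)).comp (fst.comp fst) (fst.comp snd)).to₂)

private lemma hbadB : Primrec₂ badB := by
  have hwv : Primrec fun a : List ℕ × List (ℕ × ℕ) => windowOut a.1 a.2 :=
    hwindowOut.comp fst snd
  have b1 : Primrec fun a : List ℕ × List (ℕ × ℕ) => decide ((a.2.map Prod.snd).sum = 0) :=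
    (Primrec.eq.comp (hsum.comp (list_map snd (snd.comp snd).to₂)) (const 0)).decide
  have b2 : Primrec fun a : List ℕ × List (ℕ × ℕ) =>
      decide ((windowOut a.1 a.2).reverse = windowOut a.1 a.2) :=
    (Primrec.eq.comp (list_reverse.comp hwv) hwv).decide
  exact Primrec.and.comp b1 b2

private lemma hwordsLen : Primrec₂ wordsLen := by
  have hh : Primrec₂ fun (a : ℕ × ℕ) (yIH : ℕ × List (List ℕ)) =>
      (List.range a.1).flatMap fun d => yIH.2.map (d :: ·) := by
    have : Primrec fun p : (ℕ × ℕ) × ℕ × List (List ℕ) =>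
        (List.range p.1.1).flatMap fun d => p.2.2.map (d :: ·) :=
      list_flatMap (list_range.comp (fst.comp fst))
        (list_map (snd.comp (snd.comp fst))
          (Primrec₂.comp₂ list_cons ((snd.comp fst).to₂) Primrec₂.right))
    exact this
  exact (nat_rec' snd (const [[]]) hh).of_eq fun p => by
    rcases p with ⟨k, n⟩
    induction n with
    | zero => rfl
    | succ n ihn => simp only [wordsLen, ihn]

private lemma hstateBound : Primrec₂ stateBound := by
  have hpow : Primrec₂ (· ^ · : ℕ → ℕ → ℕ) := Primrec₂.unpaired'.1 Nat.Primrec.pow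
  exact hpow.comp
    (nat_mul.comp (nat_add.comp (list_length.comp (list_flatten.comp fst)) (const 2))
      (succ.comp snd)) snd

private lemma hallWords : Primrec₂ allWords :=
  list_flatMap (list_range.comp (succ.comp snd))
    ((hwordsLen.comp (fst.comp fst) snd).to₂)

abbrev Inp : Type := ℕ × List (List ℕ) × ℕ × List ℕ × ℕ

set_option maxHeartbeats 1000000 in
private lemma hcheckLen :
    Primrec fun x : Inp => checkLen x.1 x.2.1 x.2.2.1 x.2.2.2.1 x.2.2.2.2 := by
  have hk : Primrec fun x : Inp => x.1 := fst
  have htr : Primrec fun x : Inp => x.2.1 := fst.comp snd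
  have hq0 : Primrec fun x : Inp => x.2.2.1 := fst.comp (snd.comp snd)
  have hout : Primrec fun x : Inp => x.2.2.2.1 := fst.comp (snd.comp (snd.comp snd))
  have hL : Primrec fun x : Inp => x.2.2.2.2 := snd.comp (snd.comp (snd.comp snd))
  have hA : Primrec fun x : Inp => allWords x.1 (stateBound x.2.1 x.2.2.2.2) :=
    hallWords.comp hk (hstateBound.comp htr hL)
  have hprunArg : Primrec fun y : Inp × List ℕ =>
      prun y.1.1 y.1.2.1 (pinit y.1.2.2.1 y.1.2.2.2.2) y.2 :=
    hprun.comp (((hk.comp fst).pair (htr.comp fst)).pair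
      ((hpinit.comp (hq0.comp fst) (hL.comp fst)).pair snd))
  have hbadArg : Primrec fun y : Inp × List ℕ =>
      badB y.1.2.2.2.1 (prun y.1.1 y.1.2.1 (pinit y.1.2.2.1 y.1.2.2.2.2) y.2) :=
    hbadB.comp (hout.comp fst) hprunArg
  have hcondArg : Primrec fun y : Inp × List ℕ =>
      cond (badB y.1.2.2.2.1 (prun y.1.1 y.1.2.1 (pinit y.1.2.2.1 y.1.2.2.2.2) y.2))
        (1 : ℕ) 0 :=
    Primrec.cond hbadArg (const 1) (const 0)
  have hmap : Primrec fun x : Inp =>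
      (allWords x.1 (stateBound x.2.1 x.2.2.2.2)).map fun w =>
        cond (badB x.2.2.2.1 (prun x.1 x.2.1 (pinit x.2.2.1 x.2.2.2.2) w)) (1 : ℕ) 0 :=
    list_map (f := fun x : Inp => allWords x.1 (stateBound x.2.1 x.2.2.2.2))
      (g := fun (x : Inp) (w : List ℕ) =>
        cond (badB x.2.2.2.1 (prun x.1 x.2.1 (pinit x.2.2.1 x.2.2.2.2) w)) (1 : ℕ) 0)
      hA hcondArg.to₂
  exact (Primrec.eq.comp (hsum.comp hmap) (const 0)).decide

set_option maxHeartbeats 1000000 in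
private lemma hdecider : Primrec decider := by
  have hshift : Primrec fun x : Inp => (x.1, x.2.1, x.2.2.1, x.2.2.2.1, x.2.2.2.2 + 1) :=
    fst.pair ((fst.comp snd).pair ((fst.comp (snd.comp snd)).pair
      ((fst.comp (snd.comp (snd.comp snd))).pair
        (succ.comp (snd.comp (snd.comp (snd.comp snd)))))))
  have h2 := hcheckLen.comp hshift
  exact (Primrec.and.comp hcheckLen h2).of_eq fun x => rfl

end PrimrecProofs

/-- It is decidable, given `k ≥ 2`, a DFAO generating a `k`-automatic sequence
`a`, and a length `l ≥ 1`, whether no factor of `a` of length `≥ l` is a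
palindrome. -/
theorem avoidsLongPalindromes_decidable :
    ∃ f : ℕ × List (List ℕ) × ℕ × List ℕ × ℕ → Bool,
      Computable f ∧
      ∀ (k : ℕ) (trans : List (List ℕ)) (q0 : ℕ) (out : List ℕ) (a : ℕ → ℕ)
        (l : ℕ),
        2 ≤ k → dfaoGenerates k trans q0 out a → 1 ≤ l →
        (f (k, trans, q0, out, l) = true ↔
          ∀ w : List ℕ, IsFactorOf a w → l ≤ w.length → w.reverse ≠ w) := by
  refine ⟨decider, hdecider.to_comp, ?_⟩
  intro k trans q0 out a l hk hgen hl
  exact decider_iff hk hgen hl
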